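/- Let Γʷ(s,t) be a C¹ family of contour generators observed by a moving camera as in the context, satisfying the epipolar parametrization condition: for all (s,t) there is a scalar λ(s,t) with Γʷ_t(s,t) = λ(s,t)(Γʷ(s,t) − c(t)), where c(t) = −R(t)ᵀ𝑻(t) is the camera center. Then the image velocity at t = 0 is given by the same formula as for a fixed point, namely γ_t = Ω̂γ − ⟨e₃, Ω̂γ⟩γ + (1/ρ)(V − V_z γ); i.e., the first-order apparent motion of an occluding contour under epipolar parametrization is independent of the deformation Γʷ_t. -/

import Mathlib

open scoped RealInnerProductSpace

attribute [local instance] Matrix.frobeniusNormedAddCommGroup Matrix.frobeniusNormedSpace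

noncomputable section

/-- ℝ³ with the Euclidean inner product. -/
abbrev V3 : Type := EuclideanSpace ℝ (Fin 3)

/-- The third standard basis vector e₃ = (0,0,1). -/
def e3 : V3 := WithLp.toLp 2 (![0, 0, 1] : Fin 3 → ℝ)

/-- Matrix–vector multiplication, valued in ℝ³ with the Euclidean structure. -/
def mulV (A : Matrix (Fin 3) (Fin 3) ℝ) (v : V3) : V3 := WithLp.toLp 2 (A.mulVec v)

/-- mulV as a continuous linear map in the matrix, valued in CLMs on V3. -/
def mulVL : Matrix (Fin 3) (Fin 3) ℝ →L[ℝ] V3 →L[ℝ] V3 :=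
  LinearMap.toContinuousLinearMap
    { toFun := fun A => LinearMap.toContinuousLinearMap
        { toFun := fun v => mulV A v
          map_add' := fun x y => by
            ext i
            simp [mulV, Matrix.mulVec, dotProduct, PiLp.add_apply, mul_add,
              Finset.sum_add_distrib]
          map_smul' := fun c x => by
            ext i
            simp [mulV, Matrix.mulVec, dotProduct, PiLp.smul_apply, smul_eq_mul,
              Finset.mul_sum, mul_left_comm] }
      map_add' := fun A B => by
        ext v i
        simp [mulV, Matrix.add_mulVec, PiLp.add_apply]
      map_smul' := fun c A => by
        ext v i
        simp [mulV, Matrix.smul_mulVec, PiLp.smul_apply] }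

lemma mulVL_apply (A : Matrix (Fin 3) (Fin 3) ℝ) (v : V3) : mulVL A v = mulV A v := rfl


/-- under the epipolar parametrization, the first-order apparent
motion of an occluding contour is given by the same formula as for a fixed
point: at `t = 0`, `γ_t = Ω̂γ − ⟨e₃,Ω̂γ⟩γ + (1/ρ)(V − V_zγ)`, independently of
the deformation `Γʷ_t`. -/
theorem occluding_contour_image_velocity
    (R R' : ℝ → Matrix (Fin 3) (Fin 3) ℝ)
    (Tr Tr' : ℝ → V3)
    (Γw Γwt : ℝ → ℝ → V3)
    (lam : ℝ → ℝ → ℝ)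
    (Γ : ℝ → ℝ → V3) (ρ : ℝ → ℝ → ℝ)
    (γ γt : ℝ → ℝ → V3)
    -- camera motion: R(t) ∈ SO(3), C¹, with R(0) = I, 𝑻(0) = 0
    (hRorth : ∀ t, R t * (R t).transpose = 1)
    (hRdet : ∀ t, (R t).det = 1)
    (hR' : ∀ t, HasDerivAt R (R' t) t)
    (hR0 : R 0 = 1)
    (hTr' : ∀ t, HasDerivAt Tr (Tr' t) t)
    (hTr0 : Tr 0 = 0)
    -- contour generator, C¹ in time
    (hΓwt : ∀ s t, HasDerivAt (fun τ => Γw s τ) (Γwt s t) t)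
    -- epipolar parametrization: Γʷ_t = λ(Γʷ − c), with camera center c = −Rᵀ𝑻
    (hepip : ∀ s t, Γwt s t
      = lam s t • (Γw s t - (-(mulV (R t).transpose (Tr t)))))
    -- camera coordinates, depth and image
    (hΓ : ∀ s t, Γ s t = mulV (R t) (Γw s t) + Tr t)
    (hρ : ∀ s t, ρ s t = ⟪e3, Γ s t⟫)
    (hρpos : ∀ s t, 0 < ρ s t)
    (hγ : ∀ s t, γ s t = (ρ s t)⁻¹ • Γ s t)
    -- image velocity
    (hγt : ∀ s t, HasDerivAt (fun τ => γ s τ) (γt s t) t) :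
    -- conclusion at t = 0, with Ω̂ = R′(0)R(0)ᵀ, V = 𝑻′(0), V_z = ⟨e₃,V⟩
    ∀ s,
      (let Ωh := R' 0 * (R 0).transpose
       let V := Tr' 0
       γt s 0 = mulV Ωh (γ s 0) - ⟪e3, mulV Ωh (γ s 0)⟫ • γ s 0
          + (ρ s 0)⁻¹ • (V - ⟪e3, V⟫ • γ s 0)) := by
  intro s
  simp only [hR0, Matrix.transpose_one, mul_one]
  -- abbreviations at t = 0
  set P : V3 := Γ s 0 with hP
  set r : ℝ := ρ s 0 with hr
  set l : ℝ := lam s 0 with hl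
  have hrpos : 0 < r := hρpos s 0
  have hrne : r ≠ 0 := ne_of_gt hrpos
  -- Γ s 0 = Γw s 0
  have hΓ0 : Γ s 0 = Γw s 0 := by
    rw [hΓ, hR0, hTr0]
    simp [mulV, Matrix.one_mulVec]
  -- Γwt s 0 = l • P
  have hΓwt0 : Γwt s 0 = l • P := by
    rw [hepip, hR0, hTr0, hP, hΓ0]
    simp [mulV, Matrix.mulVec_zero]
    rfl
  -- derivative of Γ s · at 0
  set Γ' : V3 := mulV (R' 0) P + l • P + Tr' 0 with hΓ'
  have hΓd : HasDerivAt (fun τ => Γ s τ) Γ' 0 := by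
    have h1 : HasDerivAt (fun τ => mulVL (R τ)) (mulVL (R' 0)) 0 :=
      mulVL.hasFDerivAt.comp_hasDerivAt 0 (hR' 0)
    have h2 : HasDerivAt (fun τ => mulVL (R τ) (Γw s τ))
        (mulVL (R' 0) (Γw s 0) + mulVL (R 0) (Γwt s 0)) 0 :=
      h1.clm_apply (hΓwt s 0)
    have h3 : HasDerivAt (fun τ => mulVL (R τ) (Γw s τ) + Tr τ) _ 0 := h2.add (hTr' 0)
    have he : (fun τ => mulVL (R τ) (Γw s τ) + Tr τ) = fun τ => Γ s τ := by
      funext τ; rw [hΓ, mulVL_apply]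
    rw [he] at h3
    convert h3 using 1
    rw [hΓ', hΓwt0, hR0, mulVL_apply, mulVL_apply, hP, hΓ0]
    simp [mulV, Matrix.one_mulVec]
  -- derivative of ρ s · at 0
  set r' : ℝ := ⟪e3, Γ'⟫ with hr'
  have hρd : HasDerivAt (fun τ => ρ s τ) r' 0 := by
    have h := (hasDerivAt_const (0:ℝ) e3).inner ℝ hΓd
    simp only [inner_zero_left, inner_zero_right, zero_add, add_zero] at h
    have he : (fun τ => ⟪e3, Γ s τ⟫) = fun τ => ρ s τ := by
      funext τ; rw [hρ]
    rw [he] at h; exact h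
  -- derivative of γ s · at 0
  have hγd : HasDerivAt (fun τ => γ s τ) (r⁻¹ • Γ' + (-r' / r ^ 2) • P) 0 := by
    have h : HasDerivAt (fun τ => (ρ s τ)⁻¹ • Γ s τ) _ 0 := (hρd.inv hrne).smul hΓd
    have he : (fun τ => (ρ s τ)⁻¹ • Γ s τ) = fun τ => γ s τ := by
      funext τ; rw [hγ]
    rw [he] at h; exact h
  have key : γt s 0 = r⁻¹ • Γ' + (-r' / r ^ 2) • P := (hγt s 0).unique hγd
  -- now pure algebra
  rw [key, hγ s 0, ← hr, ← hP]
  have hmul_smul : mulV (R' 0) (r⁻¹ • P) = r⁻¹ • mulV (R' 0) P := by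
    ext i
    simp [mulV, Matrix.mulVec, dotProduct, PiLp.smul_apply, smul_eq_mul,
      Finset.mul_sum, mul_left_comm]
  have hinner : ⟪e3, mulV (R' 0) (r⁻¹ • P)⟫ = r⁻¹ * ⟪e3, mulV (R' 0) P⟫ := by
    rw [hmul_smul, real_inner_smul_right]
  have hrP : ⟪e3, P⟫ = r := (hρ s 0).symm
  have hr'e : r' = ⟪e3, mulV (R' 0) P⟫ + l * r + ⟪e3, Tr' 0⟫ := by
    rw [hr', hΓ']
    rw [inner_add_right, inner_add_right, real_inner_smul_right, hrP]
  rw [hinner, hmul_smul, hr'e, hΓ']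
  match_scalars <;> field_simp <;> ring
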